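/- Let 0 < p < 1 and let W and R be matrices in 𝒲_p. Then W + R ∈ 𝒲_p and ‖W + R‖_{𝒲_p}^p ≤ ‖W‖_{𝒲_p}^p + ‖R‖_{𝒲_p}^p. -/

import Mathlib

open scoped BigOperators

/-- The `Ξ_p = ℓ^{2p♯}(ℓ^{2p})` norm of a matrix,
`‖X‖_{Ξ_p} = (∑_j (∑_k |x_{jk}|^{2p})^{1/(1-p)})^{(1-p)/(2p)}`. -/
noncomputable def xiNorm (p : ℝ) (X : ℕ → ℕ → ℂ) : ℝ :=
  (∑' j, (∑' k, ‖X j k‖ ^ (2 * p)) ^ (1 / (1 - p))) ^ ((1 - p) / (2 * p))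

/-- `X` has finite `Ξ_p`-norm: all the sums defining `xiNorm` converge. -/
def HasXiNorm (p : ℝ) (X : ℕ → ℕ → ℂ) : Prop :=
  (∀ j, Summable fun k => ‖X j k‖ ^ (2 * p)) ∧
    Summable fun j => (∑' k, ‖X j k‖ ^ (2 * p)) ^ (1 / (1 - p))

/-- The set of values `‖X‖_{Ξ_p} ‖Y‖_{Ξ_p}` over all factorizations `W = X Yᵗ`,
i.e. `w_{jk} = ∑_l x_{jl} y_{kl}`, with `X, Y` of finite `Ξ_p`-norm.
`W ∈ 𝒲_p` iff this set is nonempty, and `‖W‖_{𝒲_p}` is its infimum. -/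
noncomputable def wReprVals (p : ℝ) (W : ℕ → ℕ → ℂ) : Set ℝ :=
  {c | ∃ X Y : ℕ → ℕ → ℂ, HasXiNorm p X ∧ HasXiNorm p Y ∧
    (∀ j k, HasSum (fun l => X j l * Y k l) (W j k)) ∧
    c = xiNorm p X * xiNorm p Y}

lemma xiNorm_nonneg (p : ℝ) (X : ℕ → ℕ → ℂ) : 0 ≤ xiNorm p X :=
  Real.rpow_nonneg (tsum_nonneg fun _ => Real.rpow_nonneg
    (tsum_nonneg fun _ => Real.rpow_nonneg (norm_nonneg _) _) _) _

lemma xiNorm_eq_zero {p : ℝ} (hp0 : 0 < p) (hp1 : p < 1) {X : ℕ → ℕ → ℂ}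
    (hX : HasXiNorm p X) (h : xiNorm p X = 0) : ∀ j k, X j k = 0 := by
  intro j k
  have h1p : 0 < 1 - p := by linarith
  have hs : (0:ℝ) < 1 / (1 - p) := by positivity
  have hinne : ∀ j', (0:ℝ) ≤ ∑' k', ‖X j' k'‖ ^ (2 * p) :=
    fun j' => tsum_nonneg fun _ => Real.rpow_nonneg (norm_nonneg _) _
  have houter : (∑' j', (∑' k', ‖X j' k'‖ ^ (2 * p)) ^ (1 / (1 - p))) = 0 := by
    have := h
    unfold xiNorm at this
    rcases (Real.rpow_eq_zero_iff_of_nonneg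
      (tsum_nonneg fun j' => Real.rpow_nonneg (hinne j') _)).1 this with ⟨h0, _⟩
    exact h0
  have hterm : (∑' k', ‖X j k'‖ ^ (2 * p)) ^ (1 / (1 - p)) = 0 := by
    have hle := Summable.le_tsum hX.2 j (fun j' _ => Real.rpow_nonneg (hinne j') _)
    have hge : (0:ℝ) ≤ (∑' k', ‖X j k'‖ ^ (2 * p)) ^ (1 / (1 - p)) :=
      Real.rpow_nonneg (hinne j) _
    linarith [houter ▸ hle]
  have hinner : (∑' k', ‖X j k'‖ ^ (2 * p)) = 0 :=
    ((Real.rpow_eq_zero_iff_of_nonneg (hinne j)).1 hterm).1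
  have habs : ‖X j k‖ ^ (2 * p) = 0 := by
    have hle := Summable.le_tsum (hX.1 j) k (fun _ _ => Real.rpow_nonneg (norm_nonneg _) _)
    have hge : (0:ℝ) ≤ ‖X j k‖ ^ (2 * p) :=
      Real.rpow_nonneg (norm_nonneg _) _
    linarith [hinner ▸ hle]
  have := ((Real.rpow_eq_zero_iff_of_nonneg (norm_nonneg _)).1 habs).1
  exact norm_eq_zero.1 this

noncomputable def itl (α β : ℝ) (X U : ℕ → ℕ → ℂ) : ℕ → ℕ → ℂ :=
  fun j l => if l % 2 = 0 then (α:ℂ) * X j (l / 2) else (β:ℂ) * U j (l / 2)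

lemma itl_even (α β : ℝ) (X U : ℕ → ℕ → ℂ) (j l : ℕ) :
    itl α β X U j (2 * l) = (α:ℂ) * X j l := by
  have h1 : (2 * l) % 2 = 0 := by omega
  have h2 : (2 * l) / 2 = l := by omega
  simp [itl, h1, h2]

lemma itl_odd (α β : ℝ) (X U : ℕ → ℕ → ℂ) (j l : ℕ) :
    itl α β X U j (2 * l + 1) = (β:ℂ) * U j l := by
  have h1 : (2 * l + 1) % 2 = 1 := by omega
  have h2 : (2 * l + 1) / 2 = l := by omega
  simp [itl, h1, h2]

lemma itl_hasSum {α β : ℝ} (hα : α ≠ 0) (hβ : β ≠ 0) (X Y U V : ℕ → ℕ → ℂ)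
    (j k : ℕ) {w r : ℂ} (hW : HasSum (fun l => X j l * Y k l) w)
    (hR : HasSum (fun l => U j l * V k l) r) :
    HasSum (fun l => itl α β X U j l * itl α⁻¹ β⁻¹ Y V k l) (w + r) := by
  apply HasSum.even_add_odd
  · have he : (fun l => itl α β X U j (2 * l) * itl α⁻¹ β⁻¹ Y V k (2 * l)) =
        fun l => X j l * Y k l := by
      funext l
      rw [itl_even, itl_even]
      have : ((α:ℂ)) * ((α⁻¹ : ℝ):ℂ) = 1 := by
        push_cast
        field_simp
        exact div_self (by exact_mod_cast hα)
      calc (α:ℂ) * X j l * (((α⁻¹:ℝ):ℂ) * Y k l)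
          = ((α:ℂ) * ((α⁻¹:ℝ):ℂ)) * (X j l * Y k l) := by ring
        _ = X j l * Y k l := by rw [this, one_mul]
    rw [he]; exact hW
  · have ho : (fun l => itl α β X U j (2 * l + 1) * itl α⁻¹ β⁻¹ Y V k (2 * l + 1)) =
        fun l => U j l * V k l := by
      funext l
      rw [itl_odd, itl_odd]
      have : ((β:ℂ)) * ((β⁻¹ : ℝ):ℂ) = 1 := by
        push_cast
        field_simp
        exact div_self (by exact_mod_cast hβ)
      calc (β:ℂ) * U j l * (((β⁻¹:ℝ):ℂ) * V k l)
          = ((β:ℂ) * ((β⁻¹:ℝ):ℂ)) * (U j l * V k l) := by ring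
        _ = U j l * V k l := by rw [this, one_mul]
    rw [ho]; exact hR

lemma itl_bound {p : ℝ} (hp0 : 0 < p) (hp1 : p < 1) {X U : ℕ → ℕ → ℂ}
    (hX : HasXiNorm p X) (hU : HasXiNorm p U) {α β : ℝ} (hα : 0 < α) (hβ : 0 < β) :
    HasXiNorm p (itl α β X U) ∧
      xiNorm p (itl α β X U) ≤
        (α ^ (2*p) * xiNorm p X ^ (2*p) + β ^ (2*p) * xiNorm p U ^ (2*p)) ^ (1/(2*p)) := by
  have h1p : (0:ℝ) < 1 - p := by linarith
  set s : ℝ := 1 / (1 - p) with hs_def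
  have hs1 : (1:ℝ) ≤ s := by rw [hs_def, le_div_iff₀ h1p]; linarith
  have hs_inv : 1 / s = 1 - p := by rw [hs_def, one_div_one_div]
  set a : ℕ → ℝ := fun j => ∑' k, ‖X j k‖ ^ (2*p) with ha_def
  set b : ℕ → ℝ := fun j => ∑' k, ‖U j k‖ ^ (2*p) with hb_def
  have ha_nonneg : ∀ j, 0 ≤ a j :=
    fun j => tsum_nonneg fun _ => Real.rpow_nonneg (norm_nonneg _) _
  have hb_nonneg : ∀ j, 0 ≤ b j :=
    fun j => tsum_nonneg fun _ => Real.rpow_nonneg (norm_nonneg _) _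
  set f : ℕ → ℝ := fun j => α ^ (2*p) * a j with hf_def
  set g : ℕ → ℝ := fun j => β ^ (2*p) * b j with hg_def
  have hf_nonneg : ∀ j, 0 ≤ f j := fun j => mul_nonneg (Real.rpow_nonneg hα.le _) (ha_nonneg j)
  have hg_nonneg : ∀ j, 0 ≤ g j := fun j => mul_nonneg (Real.rpow_nonneg hβ.le _) (hb_nonneg j)
  have hinner : ∀ j, HasSum (fun l => ‖itl α β X U j l‖ ^ (2*p)) (f j + g j) := by
    intro j
    apply HasSum.even_add_odd
    · have he : (fun l => ‖itl α β X U j (2*l)‖ ^ (2*p)) =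
          fun l => α ^ (2*p) * ‖X j l‖ ^ (2*p) := by
        funext l
        rw [itl_even, norm_mul, Complex.norm_real, Real.norm_eq_abs, abs_of_pos hα,
          Real.mul_rpow hα.le (norm_nonneg _)]
      rw [he]
      exact ((hX.1 j).hasSum).mul_left _
    · have ho : (fun l => ‖itl α β X U j (2*l+1)‖ ^ (2*p)) =
          fun l => β ^ (2*p) * ‖U j l‖ ^ (2*p) := by
        funext l
        rw [itl_odd, norm_mul, Complex.norm_real, Real.norm_eq_abs, abs_of_pos hβ,
          Real.mul_rpow hβ.le (norm_nonneg _)]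
      rw [ho]
      exact ((hU.1 j).hasSum).mul_left _
  have htsum : ∀ j, (∑' l, ‖itl α β X U j l‖ ^ (2*p)) = f j + g j :=
    fun j => (hinner j).tsum_eq
  have hfs : Summable fun j => f j ^ s :=
    (hX.2.mul_left ((α ^ (2*p)) ^ s)).congr fun j =>
      (Real.mul_rpow (Real.rpow_nonneg hα.le _) (ha_nonneg j)).symm
  have hgs : Summable fun j => g j ^ s :=
    (hU.2.mul_left ((β ^ (2*p)) ^ s)).congr fun j =>
      (Real.mul_rpow (Real.rpow_nonneg hβ.le _) (hb_nonneg j)).symm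
  obtain ⟨hsum_fg, hmink⟩ :=
    Real.Lp_add_le_tsum_of_nonneg hs1 hf_nonneg hg_nonneg hfs hgs
  have hXi : HasXiNorm p (itl α β X U) := by
    constructor
    · exact fun j => (hinner j).summable
    · exact hsum_fg.congr fun j => by rw [htsum j]
  refine ⟨hXi, ?_⟩
  have h2p : (0:ℝ) < 2 * p := by linarith
  -- rewrite xiNorm of itl
  have hT_nonneg : 0 ≤ ∑' j, (f j + g j) ^ s :=
    tsum_nonneg fun j => Real.rpow_nonneg (add_nonneg (hf_nonneg j) (hg_nonneg j)) _
  have hxi_eq : xiNorm p (itl α β X U) = (∑' j, (f j + g j) ^ s) ^ ((1-p)/(2*p)) := by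
    unfold xiNorm
    congr 1
    exact tsum_congr fun j => by rw [htsum j]
  -- compute the two pieces of the RHS of Minkowski
  have hs_ne : s ≠ 0 := by positivity
  have hxx : xiNorm p X = (∑' j, (a j) ^ s) ^ ((1-p)/(2*p)) := rfl
  have hyy : xiNorm p U = (∑' j, (b j) ^ s) ^ ((1-p)/(2*p)) := rfl
  have hA0 : 0 ≤ ∑' j, (a j) ^ s := tsum_nonneg fun j => Real.rpow_nonneg (ha_nonneg j) _
  have hB0 : 0 ≤ ∑' j, (b j) ^ s := tsum_nonneg fun j => Real.rpow_nonneg (hb_nonneg j) _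
  have e1 : ∀ γ : ℝ, 0 < γ → ((γ ^ (2*p)) ^ s) ^ (1/s) = γ ^ (2*p) := by
    intro γ hγ
    rw [← Real.rpow_mul hγ.le, ← Real.rpow_mul hγ.le]
    congr 1
    field_simp
  have e2 : (∑' j, (a j) ^ s) ^ (1/s) = xiNorm p X ^ (2*p) := by
    rw [hxx, ← Real.rpow_mul hA0]
    congr 1
    rw [hs_inv]
    field_simp
  have e3 : (∑' j, (b j) ^ s) ^ (1/s) = xiNorm p U ^ (2*p) := by
    rw [hyy, ← Real.rpow_mul hB0]
    congr 1
    rw [hs_inv]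
    field_simp
  have hfs_eq : (∑' j, f j ^ s) ^ (1/s) = α ^ (2*p) * xiNorm p X ^ (2*p) := by
    have h1 : (∑' j, f j ^ s) = (α ^ (2*p)) ^ s * ∑' j, (a j) ^ s := by
      rw [← tsum_mul_left]
      exact tsum_congr fun j => Real.mul_rpow (Real.rpow_nonneg hα.le _) (ha_nonneg j)
    rw [h1, Real.mul_rpow (Real.rpow_nonneg (Real.rpow_nonneg hα.le _) _) hA0, e1 α hα, e2]
  have hgs_eq : (∑' j, g j ^ s) ^ (1/s) = β ^ (2*p) * xiNorm p U ^ (2*p) := by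
    have h1 : (∑' j, g j ^ s) = (β ^ (2*p)) ^ s * ∑' j, (b j) ^ s := by
      rw [← tsum_mul_left]
      exact tsum_congr fun j => Real.mul_rpow (Real.rpow_nonneg hβ.le _) (hb_nonneg j)
    rw [h1, Real.mul_rpow (Real.rpow_nonneg (Real.rpow_nonneg hβ.le _) _) hB0, e1 β hβ, e3]
  rw [hfs_eq, hgs_eq, hs_inv] at hmink
  rw [hxi_eq]
  have hexp : ((1-p)/(2*p)) = (1-p) * (1/(2*p)) := by ring
  rw [hexp, Real.rpow_mul hT_nonneg]
  exact Real.rpow_le_rpow (Real.rpow_nonneg hT_nonneg _) hmink (by positivity)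

lemma wRepr_key {p : ℝ} (hp0 : 0 < p) (hp1 : p < 1) {W R : ℕ → ℕ → ℂ} {c d : ℝ}
    (hc : c ∈ wReprVals p W) (hd : d ∈ wReprVals p R) :
    ∃ e ∈ wReprVals p (fun j k => W j k + R j k), e ^ p ≤ c ^ p + d ^ p := by
  obtain ⟨X, Y, hX, hY, hXY, rfl⟩ := hc
  obtain ⟨U, V, hU, hV, hUV, rfl⟩ := hd
  have hA0 := xiNorm_nonneg p X
  have hB0 := xiNorm_nonneg p Y
  have hC0 := xiNorm_nonneg p U
  have hD0 := xiNorm_nonneg p V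
  by_cases hAB : xiNorm p X = 0 ∨ xiNorm p Y = 0
  · have hW0 : ∀ j k, W j k = 0 := by
      intro j k
      have hz : (fun l => X j l * Y k l) = fun _ => (0:ℂ) := by
        funext l
        rcases hAB with h | h
        · rw [xiNorm_eq_zero hp0 hp1 hX h j l, zero_mul]
        · rw [xiNorm_eq_zero hp0 hp1 hY h k l, mul_zero]
      exact ((hz ▸ hXY j k : HasSum (fun _ => (0:ℂ)) (W j k)).unique hasSum_zero)
    refine ⟨xiNorm p U * xiNorm p V, ⟨U, V, hU, hV, ?_, rfl⟩, ?_⟩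
    · intro j k
      simpa [hW0 j k] using hUV j k
    · have hc0 : xiNorm p X * xiNorm p Y = 0 := by
        rcases hAB with h | h <;> simp [h]
      rw [hc0, Real.zero_rpow hp0.ne', zero_add]
  by_cases hCD : xiNorm p U = 0 ∨ xiNorm p V = 0
  · have hR0 : ∀ j k, R j k = 0 := by
      intro j k
      have hz : (fun l => U j l * V k l) = fun _ => (0:ℂ) := by
        funext l
        rcases hCD with h | h
        · rw [xiNorm_eq_zero hp0 hp1 hU h j l, zero_mul]
        · rw [xiNorm_eq_zero hp0 hp1 hV h k l, mul_zero]
      exact ((hz ▸ hUV j k : HasSum (fun _ => (0:ℂ)) (R j k)).unique hasSum_zero)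
    refine ⟨xiNorm p X * xiNorm p Y, ⟨X, Y, hX, hY, ?_, rfl⟩, ?_⟩
    · intro j k
      simpa [hR0 j k] using hXY j k
    · have hd0 : xiNorm p U * xiNorm p V = 0 := by
        rcases hCD with h | h <;> simp [h]
      rw [hd0, Real.zero_rpow hp0.ne', add_zero]
  push_neg at hAB hCD
  have hA : 0 < xiNorm p X := lt_of_le_of_ne hA0 (Ne.symm hAB.1)
  have hB : 0 < xiNorm p Y := lt_of_le_of_ne hB0 (Ne.symm hAB.2)
  have hC : 0 < xiNorm p U := lt_of_le_of_ne hC0 (Ne.symm hCD.1)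
  have hD : 0 < xiNorm p V := lt_of_le_of_ne hD0 (Ne.symm hCD.2)
  set A := xiNorm p X
  set B := xiNorm p Y
  set C := xiNorm p U
  set D := xiNorm p V
  set a := A ^ p with ha_def
  set b := B ^ p with hb_def
  set c' := C ^ p with hc_def
  set d' := D ^ p with hd_def
  have ha : 0 < a := Real.rpow_pos_of_pos hA p
  have hb : 0 < b := Real.rpow_pos_of_pos hB p
  have hc' : 0 < c' := Real.rpow_pos_of_pos hC p
  have hd' : 0 < d' := Real.rpow_pos_of_pos hD p
  set t := (b * c') / (a * d') with ht_def
  have ht : 0 < t := by positivity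
  set α := t ^ (1 / (2 * p)) with hα_def
  have hα : 0 < α := Real.rpow_pos_of_pos ht _
  have h2p : (0:ℝ) < 2 * p := by linarith
  have hα2p : α ^ (2 * p) = t := by
    rw [hα_def, ← Real.rpow_mul ht.le]
    have : 1 / (2 * p) * (2 * p) = 1 := by field_simp
    rw [this, Real.rpow_one]
  have hαinv2p : (α⁻¹) ^ (2 * p) = t⁻¹ := by
    rw [Real.inv_rpow hα.le, hα2p]
  have hone : ((1:ℝ)⁻¹) ^ (2 * p) = 1 := by norm_num
  obtain ⟨hXiZ, hZle⟩ := itl_bound hp0 hp1 hX hU hα one_pos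
  obtain ⟨hXiT, hTle⟩ := itl_bound hp0 hp1 hY hV (inv_pos.2 hα) (by norm_num : (0:ℝ) < 1⁻¹)
  have hA2 : A ^ (2*p) = a * a := by
    rw [show (2:ℝ) * p = p + p by ring, Real.rpow_add hA]
  have hB2 : B ^ (2*p) = b * b := by
    rw [show (2:ℝ) * p = p + p by ring, Real.rpow_add hB]
  have hC2 : C ^ (2*p) = c' * c' := by
    rw [show (2:ℝ) * p = p + p by ring, Real.rpow_add hC]
  have hD2 : D ^ (2*p) = d' * d' := by
    rw [show (2:ℝ) * p = p + p by ring, Real.rpow_add hD]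
  rw [hα2p, Real.one_rpow, hA2, hC2, one_mul] at hZle
  rw [hαinv2p, hone, hB2, hD2, one_mul] at hTle
  set M := a * b + c' * d' with hM_def
  have hM : 0 < M := by positivity
  have hident : (t * (a*a) + c'*c') * (t⁻¹ * (b*b) + d'*d') = M ^ 2 := by
    rw [ht_def, hM_def]
    field_simp
  have hE1 : (0:ℝ) ≤ t * (a*a) + c'*c' := by positivity
  have hE2 : (0:ℝ) ≤ t⁻¹ * (b*b) + d'*d' := by positivity
  have hmulle : xiNorm p (itl α 1 X U) * xiNorm p (itl α⁻¹ 1⁻¹ Y V) ≤ (M ^ 2) ^ (1 / (2*p)) := by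
    calc xiNorm p (itl α 1 X U) * xiNorm p (itl α⁻¹ 1⁻¹ Y V)
        ≤ (t * (a*a) + c'*c') ^ (1/(2*p)) * (t⁻¹ * (b*b) + d'*d') ^ (1/(2*p)) :=
          mul_le_mul hZle hTle (xiNorm_nonneg _ _) (Real.rpow_nonneg hE1 _)
      _ = ((t * (a*a) + c'*c') * (t⁻¹ * (b*b) + d'*d')) ^ (1/(2*p)) :=
          (Real.mul_rpow hE1 hE2).symm
      _ = (M ^ 2) ^ (1/(2*p)) := by rw [hident]
  refine ⟨xiNorm p (itl α 1 X U) * xiNorm p (itl α⁻¹ 1⁻¹ Y V),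
    ⟨itl α 1 X U, itl α⁻¹ 1⁻¹ Y V, hXiZ, hXiT,
      fun j k => itl_hasSum hα.ne' one_ne_zero X Y U V j k (hXY j k) (hUV j k), rfl⟩, ?_⟩
  have hMpow : ((M ^ 2) ^ (1 / (2*p))) ^ p = M := by
    rw [← Real.rpow_natCast M 2, ← Real.rpow_mul hM.le, ← Real.rpow_mul hM.le]
    have : ((2:ℕ):ℝ) * (1 / (2*p)) * p = 1 := by push_cast; field_simp
    rw [this, Real.rpow_one]
  calc (xiNorm p (itl α 1 X U) * xiNorm p (itl α⁻¹ 1⁻¹ Y V)) ^ p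
      ≤ ((M ^ 2) ^ (1 / (2*p))) ^ p :=
        Real.rpow_le_rpow (mul_nonneg (xiNorm_nonneg _ _) (xiNorm_nonneg _ _)) hmulle hp0.le
    _ = M := hMpow
    _ = (A * B) ^ p + (C * D) ^ p := by
        rw [hM_def, Real.mul_rpow hA.le hB.le, Real.mul_rpow hC.le hD.le]

lemma wRepr_mem_nonneg {p : ℝ} {W : ℕ → ℕ → ℂ} {c : ℝ} (hc : c ∈ wReprVals p W) : 0 ≤ c := by
  obtain ⟨X, Y, _, _, _, rfl⟩ := hc
  exact mul_nonneg (xiNorm_nonneg _ _) (xiNorm_nonneg _ _)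

/-- For `0 < p < 1`, if `W, R ∈ 𝒲_p` then `W + R ∈ 𝒲_p` and
`‖W + R‖_{𝒲_p}^p ≤ ‖W‖_{𝒲_p}^p + ‖R‖_{𝒲_p}^p`. -/
theorem stmt11 (p : ℝ) (hp0 : 0 < p) (hp1 : p < 1)
    (W R : ℕ → ℕ → ℂ)
    (hW : (wReprVals p W).Nonempty) (hR : (wReprVals p R).Nonempty) :
    (wReprVals p fun j k => W j k + R j k).Nonempty ∧
      sInf (wReprVals p fun j k => W j k + R j k) ^ p ≤
        sInf (wReprVals p W) ^ p + sInf (wReprVals p R) ^ p := by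
  obtain ⟨c, hc⟩ := hW
  obtain ⟨d, hd⟩ := hR
  obtain ⟨e, he, _⟩ := wRepr_key hp0 hp1 hc hd
  refine ⟨⟨e, he⟩, ?_⟩
  set S := wReprVals p fun j k => W j k + R j k with hS_def
  have hbddS : BddBelow S := ⟨0, fun x hx => wRepr_mem_nonneg hx⟩
  have hS0 : 0 ≤ sInf S := le_csInf ⟨e, he⟩ fun x hx => wRepr_mem_nonneg hx
  have hkey : ∀ ε : ℝ, ε ∈ Set.Ioi (0:ℝ) →
      sInf S ^ p ≤ (sInf (wReprVals p W) + ε) ^ p + (sInf (wReprVals p R) + ε) ^ p := by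
    intro ε hε
    obtain ⟨c1, hc1, hc1lt⟩ := exists_lt_of_csInf_lt ⟨c, hc⟩
      (lt_add_of_pos_right (sInf (wReprVals p W)) hε)
    obtain ⟨d1, hd1, hd1lt⟩ := exists_lt_of_csInf_lt ⟨d, hd⟩
      (lt_add_of_pos_right (sInf (wReprVals p R)) hε)
    obtain ⟨e1, he1, he1le⟩ := wRepr_key hp0 hp1 hc1 hd1
    have h2 : sInf S ^ p ≤ e1 ^ p :=
      Real.rpow_le_rpow hS0 (csInf_le hbddS he1) hp0.le
    have h3 : c1 ^ p ≤ (sInf (wReprVals p W) + ε) ^ p :=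
      Real.rpow_le_rpow (wRepr_mem_nonneg hc1) hc1lt.le hp0.le
    have h4 : d1 ^ p ≤ (sInf (wReprVals p R) + ε) ^ p :=
      Real.rpow_le_rpow (wRepr_mem_nonneg hd1) hd1lt.le hp0.le
    linarith
  have hlim : Filter.Tendsto
      (fun ε : ℝ => (sInf (wReprVals p W) + ε) ^ p + (sInf (wReprVals p R) + ε) ^ p)
      (nhdsWithin 0 (Set.Ioi 0))
      (nhds (sInf (wReprVals p W) ^ p + sInf (wReprVals p R) ^ p)) := by
    have base : ∀ q : ℝ, Filter.Tendsto (fun ε : ℝ => (q + ε) ^ p)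
        (nhdsWithin 0 (Set.Ioi 0)) (nhds (q ^ p)) := by
      intro q
      have h1 : Filter.Tendsto (fun ε : ℝ => q + ε) (nhdsWithin 0 (Set.Ioi 0)) (nhds q) := by
        have h0 : Filter.Tendsto (fun ε : ℝ => q + ε) (nhds 0) (nhds (q + 0)) :=
          Filter.Tendsto.add tendsto_const_nhds Filter.tendsto_id
        rw [add_zero] at h0
        exact h0.mono_left nhdsWithin_le_nhds
      have h2 : ContinuousAt (fun x : ℝ => x ^ p) q :=
        Real.continuousAt_rpow_const _ _ (Or.inr hp0.le)
      exact h2.tendsto.comp h1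
    exact (base _).add (base _)
  exact ge_of_tendsto hlim (Filter.eventually_of_mem self_mem_nhdsWithin hkey)
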